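/- Let q ≥ 3 be an odd integer and let Pₙ be the polynomials defined by P₀(x) = 1, P₁(x) = x, P_{n+1}(x) = ((q+1)/q)·x·Pₙ(x) − (1/q)·P_{n−1}(x). Then for every n ≥ 1 and every s ∈ [−1,1], |Pₙ(s) − sⁿ| ≤ 2(n−1)/q. In particular, for each fixed n, sup_{s ∈ [−1,1]} |Pₙ(s) − sⁿ| → 0 as q → ∞. -/
import Mathlib


noncomputable section

/-- The spherical polynomials `Pₙ` for the parameter `q`:
`P₀ = 1`, `P₁ = X`, `P_{n+2}(x) = ((q+1)/q)·x·P_{n+1}(x) − (1/q)·Pₙ(x)`. -/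
def P (q : ℝ) : ℕ → ℝ → ℝ
  | 0 => fun _ => 1
  | 1 => fun s => s
  | (n + 2) => fun s => ((q + 1) / q) * s * P q (n + 1) s - (1 / q) * P q n s

lemma P_key (q : ℝ) (hq : 3 ≤ q) (s : ℝ) (hs1 : -1 ≤ s) (hs2 : s ≤ 1) (n : ℕ) :
    |P q n s| ≤ 1 ∧ |P q (n + 1) s - s * P q n s| ≤ (1 - s ^ 2) / (q - 1) := by
  have hq0 : (0:ℝ) < q := by linarith
  have hq1 : (0:ℝ) < q - 1 := by linarith
  have hs2' : s ^ 2 ≤ 1 := by nlinarith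
  have habs : |s| ≤ 1 := abs_le.mpr ⟨hs1, hs2⟩
  induction n with
  | zero =>
    constructor
    · simp [P]
    · have h : P q 1 s - s * P q 0 s = 0 := by simp [P]
      rw [h, abs_zero]
      exact div_nonneg (by nlinarith) hq1.le
  | succ n ih =>
    obtain ⟨ha, he⟩ := ih
    set a := P q n s with hadef
    set b := P q (n + 1) s with hbdef
    have hbb : |b| ≤ 1 := by
      have h1 : |b| ≤ |s * a| + |b - s * a| := by
        calc |b| = |s * a + (b - s * a)| := by ring_nf
        _ ≤ |s * a| + |b - s * a| := abs_add_le _ _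
      have h2 : |s * a| ≤ |s| := by
        rw [abs_mul]
        calc |s| * |a| ≤ |s| * 1 := by
              exact mul_le_mul_of_nonneg_left ha (abs_nonneg s)
        _ = |s| := mul_one _
      have h3 : (1 - s ^ 2) / (q - 1) ≤ 1 - |s| := by
        rw [div_le_iff₀ hq1]
        nlinarith [sq_abs s, abs_nonneg s, mul_nonneg (sub_nonneg.mpr habs) (by linarith : (0:ℝ) ≤ q - 3)]
      linarith
    refine ⟨hbb, ?_⟩
    have hP2 : P q (n + 2) s - s * b = (1 / q) * (s * (b - s * a) - (1 - s ^ 2) * a) := by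
      show ((q + 1) / q) * s * P q (n + 1) s - (1 / q) * P q n s - s * b = _
      rw [← hadef, ← hbdef]
      field_simp
      ring
    rw [hP2, abs_mul]
    have h4 : |s * (b - s * a) - (1 - s ^ 2) * a| ≤ (1 - s ^ 2) / (q - 1) + (1 - s ^ 2) := by
      calc |s * (b - s * a) - (1 - s ^ 2) * a|
          ≤ |s * (b - s * a)| + |(1 - s ^ 2) * a| := abs_sub _ _
      _ = |s| * |b - s * a| + (1 - s ^ 2) * |a| := by
          rw [abs_mul, abs_mul, abs_of_nonneg (by linarith : (0:ℝ) ≤ 1 - s ^ 2)]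
      _ ≤ 1 * ((1 - s ^ 2) / (q - 1)) + (1 - s ^ 2) * 1 := by
          gcongr <;> first | assumption | linarith
      _ = (1 - s ^ 2) / (q - 1) + (1 - s ^ 2) := by ring
    have h5 : |1 / q| = 1 / q := abs_of_pos (by positivity)
    rw [h5]
    have h6 : (1 / q) * ((1 - s ^ 2) / (q - 1) + (1 - s ^ 2)) = (1 - s ^ 2) / (q - 1) := by
      field_simp
      ring
    calc 1 / q * |s * (b - s * a) - (1 - s ^ 2) * a|
        ≤ 1 / q * ((1 - s ^ 2) / (q - 1) + (1 - s ^ 2)) := by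
          exact mul_le_mul_of_nonneg_left h4 (by positivity)
    _ = (1 - s ^ 2) / (q - 1) := h6

lemma P_diff (q : ℝ) (hq : 3 ≤ q) (s : ℝ) (hs1 : -1 ≤ s) (hs2 : s ≤ 1) (n : ℕ) :
    |P q (n + 1) s - s ^ (n + 1)| ≤ 2 * n / q := by
  have hq0 : (0:ℝ) < q := by linarith
  have hq1 : (0:ℝ) < q - 1 := by linarith
  have hs2' : s ^ 2 ≤ 1 := by nlinarith
  have habs : |s| ≤ 1 := abs_le.mpr ⟨hs1, hs2⟩
  induction n with
  | zero => simp [P]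
  | succ n ih =>
    have he := (P_key q hq s hs1 hs2 (n + 1)).2
    have hdecomp : P q (n + 2) s - s ^ (n + 2) =
        s * (P q (n + 1) s - s ^ (n + 1)) + (P q (n + 2) s - s * P q (n + 1) s) := by ring
    have h1 : |P q (n + 2) s - s ^ (n + 2)|
        ≤ |s| * |P q (n + 1) s - s ^ (n + 1)| + |P q (n + 2) s - s * P q (n + 1) s| := by
      rw [hdecomp]
      calc _ ≤ |s * (P q (n + 1) s - s ^ (n + 1))| + |P q (n + 2) s - s * P q (n + 1) s| :=
            abs_add_le _ _
      _ = _ := by rw [abs_mul]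
    have h2 : |s| * |P q (n + 1) s - s ^ (n + 1)| ≤ 2 * n / q := by
      calc |s| * |P q (n + 1) s - s ^ (n + 1)| ≤ 1 * (2 * n / q) := by
            gcongr <;> assumption
      _ = 2 * n / q := one_mul _
    have h3 : (1 - s ^ 2) / (q - 1) ≤ 2 / q := by
      rw [div_le_div_iff₀ hq1 hq0]
      nlinarith [sq_nonneg s]
    have h4 : 2 * (n : ℝ) / q + 2 / q = 2 * ((n : ℝ) + 1) / q := by ring
    calc |P q (n + 2) s - s ^ (n + 2)|
        ≤ 2 * n / q + (1 - s ^ 2) / (q - 1) := by linarith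
    _ ≤ 2 * n / q + 2 / q := by linarith
    _ = 2 * ((n : ℝ) + 1) / q := h4
    _ = 2 * ((n + 1 : ℕ) : ℝ) / q := by push_cast; ring

lemma P_diff' (q : ℝ) (hq : 3 ≤ q) (s : ℝ) (hs1 : -1 ≤ s) (hs2 : s ≤ 1) (n : ℕ) :
    |P q n s - s ^ n| ≤ 2 * n / q := by
  cases n with
  | zero => simp [P]
  | succ n =>
    have h := P_diff q hq s hs1 hs2 n
    have : 2 * (n : ℝ) / q ≤ 2 * ((n + 1 : ℕ) : ℝ) / q := by
      have hq0 : (0:ℝ) < q := by linarith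
      gcongr
      push_cast; linarith
    linarith

theorem P_close_to_pow :
    (∀ q : ℕ, 3 ≤ q → Odd q → ∀ n : ℕ, 1 ≤ n → ∀ s ∈ Set.Icc (-1 : ℝ) 1,
      |P (q : ℝ) n s - s ^ n| ≤ 2 * ((n : ℝ) - 1) / (q : ℝ)) ∧
    (∀ n : ℕ, Filter.Tendsto
      (fun r : ℕ => ⨆ s : Set.Icc (-1 : ℝ) 1, |P (2 * (r : ℝ) - 1) n (s : ℝ) - (s : ℝ) ^ n|)
      Filter.atTop (nhds 0)) := by
  constructor
  · intro q hq _ n hn s hs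
    obtain ⟨hs1, hs2⟩ := hs
    have hq3 : (3:ℝ) ≤ (q:ℝ) := by exact_mod_cast hq
    obtain ⟨m, rfl⟩ := Nat.exists_eq_add_of_le hn
    have h := P_diff (q:ℝ) hq3 s hs1 hs2 m
    have heq : 2 * (((1 + m : ℕ) : ℝ) - 1) / (q:ℝ) = 2 * (m:ℝ) / (q:ℝ) := by push_cast; ring
    rw [heq]
    have : (1 + m) = m + 1 := by ring
    rw [this]
    exact h
  · intro n
    have h2r : Filter.Tendsto (fun r : ℕ => 2 * (r:ℝ) - 1) Filter.atTop Filter.atTop := by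
      have h1 : Filter.Tendsto (fun r : ℕ => 2 * (r:ℝ)) Filter.atTop Filter.atTop :=
        (tendsto_natCast_atTop_atTop).const_mul_atTop two_pos
      simpa [sub_eq_add_neg] using Filter.tendsto_atTop_add_const_right Filter.atTop (-1 : ℝ) h1
    have hglim : Filter.Tendsto (fun r : ℕ => 2 * (n:ℝ) / (2 * (r:ℝ) - 1))
        Filter.atTop (nhds 0) := Filter.Tendsto.div_atTop tendsto_const_nhds h2r
    apply tendsto_of_tendsto_of_tendsto_of_le_of_le' tendsto_const_nhds hglim
    · filter_upwards with r
      exact Real.iSup_nonneg fun s => abs_nonneg _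
    · filter_upwards [Filter.eventually_ge_atTop 2] with r hr
      have hr' : (2:ℝ) ≤ (r:ℝ) := by exact_mod_cast hr
      have hq3 : (3:ℝ) ≤ 2 * (r:ℝ) - 1 := by linarith
      have hden : (0:ℝ) < 2 * (r:ℝ) - 1 := by linarith
      apply Real.iSup_le
      · intro s
        exact P_diff' _ hq3 s s.2.1 s.2.2 n
      · positivity
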